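/- Let L be a separably closed field containing F_q and an element s transcendental over F_q. For every nonzero polynomial b ∈ F_q[X], the set {λ ∈ L : D_s(b)(λ) = 0} is an F_q-subspace of L with exactly q^{deg b} elements (i.e. of F_q-dimension deg b). -/

import Mathlib

open Polynomial

noncomputable def Qpoly (L : Type) [Field L] (s : L) (q : ℕ) : ℕ → Polynomial L
  | 0 => X
  | (i+1) => C s * Qpoly L s q i + (Qpoly L s q i) ^ q

variable {L : Type} [Field L] {s : L} {q : ℕ}

lemma Qpoly_monic_natDegree (hq : 2 ≤ q) :
    ∀ i, (Qpoly L s q i).Monic ∧ (Qpoly L s q i).natDegree = q ^ i := by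
  intro i
  induction i with
  | zero => exact ⟨monic_X, by simp [Qpoly]⟩
  | succ i ih =>
    obtain ⟨hmon, hdeg⟩ := ih
    have hmonq : ((Qpoly L s q i) ^ q).Monic := hmon.pow q
    have hdq : ((Qpoly L s q i) ^ q).natDegree = q ^ (i+1) := by
      rw [natDegree_pow, hdeg, pow_succ, mul_comm]
    have hlt : (C s * Qpoly L s q i).degree < ((Qpoly L s q i) ^ q).degree := by
      have h1 : (C s * Qpoly L s q i).degree ≤ (Qpoly L s q i).degree := by
        calc (C s * Qpoly L s q i).degree ≤ (C s).degree + (Qpoly L s q i).degree :=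
              degree_mul_le _ _
          _ ≤ 0 + (Qpoly L s q i).degree := add_le_add degree_C_le le_rfl
          _ = (Qpoly L s q i).degree := zero_add _
      refine lt_of_le_of_lt h1 ?_
      rw [degree_eq_natDegree hmon.ne_zero, degree_eq_natDegree hmonq.ne_zero, hdeg, hdq]
      exact_mod_cast pow_lt_pow_right₀ hq (Nat.lt_succ_self i)
    refine ⟨hmonq.add_of_right hlt, ?_⟩
    rw [show Qpoly L s q (i+1) = C s * Qpoly L s q i + (Qpoly L s q i)^q from rfl]
    rw [natDegree_add_eq_right_of_degree_lt hlt, hdq]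

lemma Qpoly_derivative (hqz : (q : L) = 0) :
    ∀ i, derivative (Qpoly L s q i) = C (s ^ i) := by
  intro i
  induction i with
  | zero => simp [Qpoly]
  | succ i ih =>
    rw [show Qpoly L s q (i+1) = C s * Qpoly L s q i + (Qpoly L s q i)^q from rfl]
    rw [derivative_add, derivative_C_mul, derivative_pow, ih, hqz]
    simp [pow_succ, mul_comm]

lemma Qpoly_eval (x : L) (i : ℕ) :
    (Qpoly L s q (i+1)).eval x = s * (Qpoly L s q i).eval x + ((Qpoly L s q i).eval x) ^ q := by
  rw [show Qpoly L s q (i+1) = C s * Qpoly L s q i + (Qpoly L s q i)^q from rfl]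
  simp

/-- Let `L` be a separably closed field containing `F_q` and an element
`s` transcendental over `F_q`. For every nonzero `b ∈ F_q[X]`, the set
`{λ ∈ L : D_s(b)(λ) = 0}` is an `F_q`-subspace of `L` with exactly `q^{deg b}` elements. -/
theorem drinfeld_torsion_card
    (p m : ℕ) (hp : p.Prime) (hm : 0 < m)
    (Fq : Type) [Field Fq] [Fintype Fq] (hq : Fintype.card Fq = p ^ m)
    (L : Type) [Field L] [Algebra Fq L] [IsSepClosed L]
    (s : L) (hs : Transcendental Fq s)
    (Ds : Polynomial Fq →ₐ[Fq] Module.End Fq L)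
    (hDs : ∀ x : L, Ds Polynomial.X x = s * x + x ^ Fintype.card Fq) :
    ∀ b : Polynomial Fq, b ≠ 0 →
      (∃ W : Submodule Fq L, (W : Set L) = {lam : L | Ds b lam = 0}) ∧
      Nat.card {lam : L // Ds b lam = 0} = Fintype.card Fq ^ b.natDegree := by
  intro b hb
  set qc := Fintype.card Fq with hqc
  have hq2 : 2 ≤ qc := by
    rw [hq]
    exact Nat.one_lt_pow hm.ne' hp.one_lt
  have hqz : (qc : L) = 0 := by
    have h0 : ((qc : ℕ) : Fq) = 0 := FiniteField.cast_card_eq_zero Fq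
    calc ((qc : ℕ) : L) = algebraMap Fq L ((qc : ℕ) : Fq) := by rw [map_natCast]
      _ = 0 := by rw [h0, map_zero]
  have hDsb : Ds = Polynomial.aeval (Ds X) :=
    Polynomial.algHom_ext (by rw [Polynomial.aeval_X])
  have hpow : ∀ (i : ℕ) (x : L), ((Ds X) ^ i) x = (Qpoly L s qc i).eval x := by
    intro i
    induction i with
    | zero => intro x; simp [Qpoly]
    | succ i ih =>
      intro x
      rw [pow_succ', Module.End.mul_apply, ih, hDs, Qpoly_eval]
  set n := b.natDegree with hn
  set P : Polynomial L :=
    ∑ i ∈ Finset.range (n+1), C (algebraMap Fq L (b.coeff i)) * Qpoly L s qc i with hP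
  have key : ∀ x : L, Ds b x = P.eval x := by
    intro x
    rw [hDsb, Polynomial.aeval_eq_sum_range, hP]
    rw [LinearMap.coe_sum, Finset.sum_apply, eval_finset_sum]
    refine Finset.sum_congr rfl fun i _ => ?_
    rw [LinearMap.smul_apply, hpow, eval_mul, eval_C, Algebra.smul_def]
  have hcn : algebraMap Fq L (b.coeff n) ≠ 0 := by
    rw [hn]
    intro h
    have h0 : b.leadingCoeff = 0 := (algebraMap Fq L).injective (by rw [map_zero, Polynomial.leadingCoeff]; exact h)
    exact hb (leadingCoeff_eq_zero.mp h0)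
  have hqnpos : 0 < qc ^ n := pow_pos (lt_of_lt_of_le two_pos hq2) n
  have hAlt :
      (∑ i ∈ Finset.range n, C (algebraMap Fq L (b.coeff i)) * Qpoly L s qc i).natDegree
        < qc ^ n := by
    have h1 : (∑ i ∈ Finset.range n,
        C (algebraMap Fq L (b.coeff i)) * Qpoly L s qc i).natDegree ≤ qc ^ n - 1 := by
      refine natDegree_sum_le_of_forall_le _ _ fun i hi => ?_
      refine le_trans (natDegree_C_mul_le _ _) ?_
      rw [(Qpoly_monic_natDegree hq2 i).2]
      exact Nat.le_pred_of_lt (Nat.pow_lt_pow_right hq2 (Finset.mem_range.mp hi))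
    omega
  have hdegP : P.natDegree = qc ^ n := by
    rw [hP, Finset.sum_range_succ, natDegree_add_eq_right_of_natDegree_lt,
      natDegree_C_mul hcn, (Qpoly_monic_natDegree hq2 n).2]
    rw [natDegree_C_mul hcn, (Qpoly_monic_natDegree hq2 n).2]
    exact hAlt
  have hPne : P ≠ 0 := by
    intro h
    rw [h, natDegree_zero] at hdegP
    omega
  have hu : (Polynomial.aeval s) b ≠ 0 := fun h => hs ⟨b, hb, h⟩
  have hderiv : derivative P = C ((Polynomial.aeval s) b) := by
    rw [hP, derivative_sum]
    have h2 : ∀ i ∈ Finset.range (n+1),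
        derivative (C (algebraMap Fq L (b.coeff i)) * Qpoly L s qc i)
          = C (algebraMap Fq L (b.coeff i) * s ^ i) := fun i _ => by
      rw [derivative_C_mul, Qpoly_derivative hqz, ← C_mul]
    rw [Finset.sum_congr rfl h2, ← map_sum C]
    congr 1
    rw [Polynomial.aeval_eq_sum_range]
    exact (Finset.sum_congr rfl fun i _ => (Algebra.smul_def _ _)).symm
  have hsep : P.Separable := by
    rw [Polynomial.separable_def, hderiv]
    exact ⟨0, C ((Polynomial.aeval s) b)⁻¹,
      by rw [zero_mul, zero_add, ← C_mul, inv_mul_cancel₀ hu, C_1]⟩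
  have hcard : Fintype.card (P.rootSet L) = qc ^ n := by
    rw [Polynomial.card_rootSet_eq_natDegree hsep (IsSepClosed.splits_codomain P hsep), hdegP]
  have hset : {lam : L | Ds b lam = 0} = P.rootSet L := by
    ext x
    rw [Set.mem_setOf_eq, Polynomial.mem_rootSet_of_ne hPne, key x,
      ← Polynomial.coe_aeval_eq_eval]
  constructor
  · exact ⟨LinearMap.ker (Ds b), by ext x; simp [LinearMap.mem_ker]⟩
  · calc Nat.card {lam : L // Ds b lam = 0}
        = Nat.card (P.rootSet L) := Nat.card_congr (Equiv.setCongr hset)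
      _ = Fintype.card (P.rootSet L) := Nat.card_eq_fintype_card
      _ = qc ^ n := hcard
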